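/- For an arbitrary normed plane with arc-length parametrization φ of the unit circle, one has ω(φ(t), φ'(t)) = ||φ'(t)||_a for all t. -/

import Mathlib

noncomputable def antinorm {X : Type*} [NormedAddCommGroup X] [NormedSpace ℝ X]
    (ω : X →ₗ[ℝ] X →ₗ[ℝ] ℝ) (y : X) : ℝ :=
  sSup ((fun x => ω x y) '' {x : X | ‖x‖ ≤ 1})

/-- For the arc-length parametrization of the unit circle of an arbitrary
normed plane, `ω(φ(t), φ'(t)) = ‖φ'(t)‖ₐ`. -/
theorem omega_eq_antinorm_deriv {X : Type*} [NormedAddCommGroup X] [NormedSpace ℝ X]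
    (hdim : Module.finrank ℝ X = 2)
    (ω : X →ₗ[ℝ] X →ₗ[ℝ] ℝ)
    (halt : ∀ x : X, ω x x = 0)
    (hnd : ∀ x : X, (∀ y : X, ω x y = 0) → x = 0)
    (L : ℝ) (hL : 0 < L)
    (φ φ' : ℝ → X)
    (hderiv : ∀ t, HasDerivAt φ (φ' t) t)
    (hper : ∀ t, φ (t + L) = φ t)
    (hrange : Set.range φ = Metric.sphere (0 : X) 1)
    (hinj : Set.InjOn φ (Set.Ico 0 L))
    (hspeed : ∀ t, ‖φ' t‖ = 1)
    (horient : ∀ t, 0 < ω (φ t) (φ' t)) :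
    ∀ t, ω (φ t) (φ' t) = antinorm ω (φ' t) := by
  intro t
  set p := φ t with hp
  set v := φ' t with hv
  have hsph : ∀ s, ‖φ s‖ = 1 := by
    intro s
    have : φ s ∈ Metric.sphere (0 : X) 1 := by
      rw [← hrange]; exact ⟨s, rfl⟩
    simpa using this
  have hpnorm : ‖p‖ = 1 := hsph t
  have hpne : p ≠ 0 := by
    intro h; rw [h, norm_zero] at hpnorm; exact one_ne_zero hpnorm.symm
  obtain ⟨g, hg1, hgp⟩ := exists_dual_vector ℝ p (norm_ne_zero_iff.mpr hpne)
  have hgp1 : g p = 1 := by rw [hgp]; exact_mod_cast hpnorm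
  have hgle : ∀ x : X, ‖x‖ ≤ 1 → g x ≤ 1 := by
    intro x hx
    calc g x ≤ ‖g x‖ := le_abs_self _
      _ ≤ ‖g‖ * ‖x‖ := g.le_opNorm x
      _ ≤ 1 := by rw [hg1]; simpa using hx
  -- g (φ' t) = 0
  have hgv : g v = 0 := by
    have hd : HasDerivAt (fun s => g (φ s)) (g v) t :=
      g.hasFDerivAt.comp_hasDerivAt t (hderiv t)
    have hmax : IsLocalMax (fun s => g (φ s)) t := by
      refine Filter.Eventually.of_forall (fun s => ?_)
      have : g (φ s) ≤ 1 := hgle _ (le_of_eq (hsph s))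
      show g (φ s) ≤ g p
      rw [hgp1]; exact this
    exact hmax.hasDerivAt_eq_zero hd
  have hωpv : 0 < ω p v := horient t
  have hvne : v ≠ 0 := by
    intro h
    have := hspeed t
    rw [← hv, h, norm_zero] at this
    exact one_ne_zero this.symm
  -- p and v are linearly independent
  have hindep : LinearIndependent ℝ ![p, v] := by
    rw [LinearIndependent.pair_iff]
    intro a b hab
    have h1 : ω (a • p + b • v) v = 0 := by rw [hab]; simp
    have h2 : a * ω p v = 0 := by
      simpa [halt] using h1
    have ha : a = 0 := by
      rcases mul_eq_zero.1 h2 with h | h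
      · exact h
      · exact absurd h (ne_of_gt hωpv)
    refine ⟨ha, ?_⟩
    rw [ha, zero_smul, zero_add] at hab
    exact (smul_eq_zero.1 hab).resolve_right hvne
  have hcard : Fintype.card (Fin 2) = Module.finrank ℝ X := by simp [hdim]
  let b : Module.Basis (Fin 2) ℝ X := basisOfLinearIndependentOfCardEqFinrank hindep hcard
  have hb0 : b 0 = p := by simp [b, coe_basisOfLinearIndependentOfCardEqFinrank]
  have hb1 : b 1 = v := by simp [b, coe_basisOfLinearIndependentOfCardEqFinrank]
  -- ω · v = (ω p v) • g as linear maps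
  have hlin : ω.flip v = (ω p v) • (g : X →ₗ[ℝ] ℝ) := by
    apply b.ext
    intro i
    fin_cases i
    · simp [hb0, hgp1]
    · simp [hb1, halt, hgv]
  have hkey : ∀ x : X, ω x v = ω p v * g x := by
    intro x
    have := LinearMap.congr_fun hlin x
    simpa using this
  -- conclude the sup
  have : IsGreatest ((fun x => ω x v) '' {x : X | ‖x‖ ≤ 1}) (ω p v) := by
    constructor
    · exact ⟨p, by simpa using hpnorm.le, rfl⟩
    · rintro r ⟨x, hx, rfl⟩
      have := hgle x hx
      calc ω x v = ω p v * g x := hkey x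
        _ ≤ ω p v * 1 := by
            exact mul_le_mul_of_nonneg_left this hωpv.le
        _ = ω p v := mul_one _
  rw [antinorm, ← this.csSup_eq]
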